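/- If a and b are odd positive integers with binary digit sums s(a) = ℓ ≥ 2 and s(b) = m ≥ 2, and if the binary digit sum of the product ab equals 2, then ab < 2^(2ℓm − 4). -/

import Mathlib

/-- binary digit sum -/
def s (n : ℕ) : ℕ := (Nat.digits 2 n).sum

lemma kst_s_rec (n : ℕ) (hn : n ≠ 0) : s n = n % 2 + s (n / 2) := by
  unfold s
  rw [Nat.digits_def' (by norm_num : (1:ℕ) < 2) (Nat.pos_of_ne_zero hn)]
  simp

lemma kst_s_eq_zero : ∀ n : ℕ, s n = 0 → n = 0 := by
  intro n
  induction n using Nat.strong_induction_on with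
  | _ n ih =>
    intro h
    by_contra hn
    rw [kst_s_rec n hn] at h
    have h2 := ih (n / 2) (Nat.div_lt_self (Nat.pos_of_ne_zero hn) one_lt_two)
      (by omega)
    have := Nat.mod_two_eq_zero_or_one n
    omega

lemma kst_s_eq_one : ∀ n : ℕ, s n = 1 → ∃ j, n = 2 ^ j := by
  intro n
  induction n using Nat.strong_induction_on with
  | _ n ih =>
    intro h
    have hn : n ≠ 0 := by
      intro h0; rw [h0] at h; simp [s] at h
    rw [kst_s_rec n hn] at h
    rcases Nat.mod_two_eq_zero_or_one n with he | ho
    · -- n even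
      have h2 : s (n / 2) = 1 := by omega
      obtain ⟨j, hj⟩ := ih (n / 2) (Nat.div_lt_self (Nat.pos_of_ne_zero hn) one_lt_two) h2
      exact ⟨j + 1, by rw [pow_succ]; omega⟩
    · have h2 : s (n / 2) = 0 := by omega
      have := kst_s_eq_zero (n / 2) h2
      exact ⟨0, by omega⟩

lemma kst_s_le_self : ∀ n : ℕ, s n ≤ n := by
  intro n
  induction n using Nat.strong_induction_on with
  | _ n ih =>
    rcases eq_or_ne n 0 with rfl | hn
    · simp [s]
    · rw [kst_s_rec n hn]
      have := ih (n / 2) (Nat.div_lt_self (Nat.pos_of_ne_zero hn) one_lt_two)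
      omega

lemma kst_legendre : ∀ N : ℕ, ∀ n < 2 ^ N, ∑ t ∈ Finset.range N, n / 2 ^ (t + 1) = n - s n := by
  intro N
  induction N with
  | zero => intro n hn; interval_cases n; simp [s]
  | succ N ih =>
    intro n hn
    rcases eq_or_ne n 0 with rfl | h0
    · simp [s]
    rw [Finset.sum_range_succ']
    have hr : ∀ t, n / 2 ^ (t + 1 + 1) = (n / 2) / 2 ^ (t + 1) := by
      intro t
      rw [Nat.div_div_eq_div_mul, ← pow_succ']
    simp only [hr]
    rw [ih (n / 2) (by
      have : n < 2 ^ N * 2 := by rw [pow_succ] at hn; omega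
      omega)]
    have h1 : s n = n % 2 + s (n / 2) := kst_s_rec n h0
    have h2 : s (n / 2) ≤ n / 2 := kst_s_le_self (n / 2)
    have h3 : n % 2 < 2 := Nat.mod_lt _ (by norm_num)
    have h4 : 2 * (n / 2) + n % 2 = n := Nat.div_add_mod n 2
    have h5 : n / 2 ^ (0 + 1) = n / 2 := rfl
    omega

lemma kst_sum_filter_testBit : ∀ N : ℕ, ∀ n < 2 ^ N,
    ∑ i ∈ (Finset.range N).filter (fun i => n.testBit i = true), 2 ^ i = n := by
  intro N
  induction N with
  | zero => intro n hn; interval_cases n; simp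
  | succ N ih =>
    intro n hn
    rw [Finset.sum_filter, Finset.sum_range_succ']
    have hr : ∀ i : ℕ, (if n.testBit (i + 1) = true then 2 ^ (i + 1) else 0)
        = 2 * (if (n / 2).testBit i = true then 2 ^ i else 0) := by
      intro i
      rw [Nat.testBit_add_one]
      split <;> ring
    simp only [hr, ← Finset.mul_sum, ← Finset.sum_filter]
    rw [ih (n / 2) (by rw [pow_succ] at hn; omega)]
    have h0 : (if n.testBit 0 = true then 2 ^ 0 else 0) = n % 2 := by
      rw [Nat.testBit_zero]
      rcases Nat.mod_two_eq_zero_or_one n with h | h <;> simp [h]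
    rw [h0]
    omega

lemma kst_card_filter_testBit : ∀ N : ℕ, ∀ n < 2 ^ N,
    ((Finset.range N).filter (fun i => n.testBit i = true)).card = s n := by
  intro N
  induction N with
  | zero => intro n hn; interval_cases n; simp [s]
  | succ N ih =>
    intro n hn
    rcases eq_or_ne n 0 with rfl | h0
    · simp [s]
    rw [Finset.card_filter, Finset.sum_range_succ']
    have hr : ∀ i : ℕ, (if n.testBit (i + 1) = true then (1:ℕ) else 0)
        = (if (n / 2).testBit i = true then 1 else 0) := by
      intro i; rw [Nat.testBit_add_one]
    simp only [hr, ← Finset.card_filter]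
    rw [ih (n / 2) (by rw [pow_succ] at hn; omega)]
    have h1 : s n = n % 2 + s (n / 2) := kst_s_rec n h0
    have h0' : (if n.testBit 0 = true then (1:ℕ) else 0) = n % 2 := by
      rw [Nat.testBit_zero]
      rcases Nat.mod_two_eq_zero_or_one n with h | h <;> simp [h]
    rw [h0']
    omega

lemma kst_geom2 (n : ℕ) : ∑ i ∈ Finset.range n, 2 ^ i = 2 ^ n - 1 := by
  induction n with
  | zero => simp
  | succ n ih =>
    rw [Finset.sum_range_succ, ih, pow_succ]
    have : 1 ≤ 2 ^ n := Nat.one_le_two_pow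
    omega

lemma kst_bit_struct (n x g : ℕ) (hx : x % 2 = 1) (hg : 1 ≤ g)
    (hn : n = 2 ^ g * x + 1) : ∀ i ≤ g, (n.testBit i = true ↔ (i = 0 ∨ i = g)) := by
  intro i hi
  rw [Nat.testBit_eq_decide_div_mod_eq, decide_eq_true_eq]
  obtain ⟨c, hc⟩ : ∃ c, 2 ^ g = 2 * c :=
    ⟨2 ^ (g - 1), by rw [← pow_succ']; congr 1; omega⟩
  rcases Nat.eq_zero_or_pos i with rfl | hipos
  · have h0 : n / 2 ^ 0 % 2 = 1 := by
      rw [pow_zero, Nat.div_one, hn, hc]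
      have h9 : 2 * c * x + 1 = 2 * (c * x) + 1 := by ring
      rw [h9]
      omega
    exact ⟨fun _ => Or.inl rfl, fun _ => h0⟩
  · have h1div : (1:ℕ) / 2 ^ i = 0 := Nat.div_eq_of_lt (Nat.one_lt_two_pow_iff.mpr (by omega))
    have hkey : n / 2 ^ i = 2 ^ (g - i) * x := by
      rw [hn]
      have h2 : (2:ℕ) ^ g * x = 2 ^ i * (2 ^ (g - i) * x) := by
        rw [← mul_assoc, ← pow_add]
        congr 2
        omega
      rw [h2, Nat.mul_add_div (by positivity), h1div, add_zero]
    rcases eq_or_lt_of_le hi with rfl | hlt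
    · rw [hkey, Nat.sub_self, pow_zero, one_mul]
      constructor
      · intro _; right; rfl
      · intro _; exact hx
    · obtain ⟨d, hd⟩ : ∃ d, 2 ^ (g - i) = 2 * d :=
        ⟨2 ^ (g - i - 1), by rw [← pow_succ']; congr 1; omega⟩
      rw [hkey, hd]
      have h9 : 2 * d * x = 2 * (d * x) := by ring
      rw [h9]
      constructor
      · intro hcontra; exfalso; omega
      · intro hcontra; exfalso; omega

lemma kst_not_lt (k g1 g2 x y : ℕ) (hx : x % 2 = 1) (hy1 : 1 ≤ y)
    (hx1 : 1 ≤ x) (hg1 : 1 ≤ g1)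
    (hexp : 2 ^ k = 2 ^ (g1 + g2) * (x * y) + 2 ^ g1 * x + 2 ^ g2 * y) :
    ¬ (g1 < g2) := by
  intro hlt
  obtain ⟨t, rfl⟩ : ∃ t, g2 = g1 + t := ⟨g2 - g1, by omega⟩
  have ht1 : 1 ≤ t := by omega
  have hM : 2 ^ k = 2 ^ g1 * (2 ^ (g1 + t) * (x * y) + x + 2 ^ t * y) := by
    rw [hexp, pow_add, pow_add]
    ring
  set M := 2 ^ (g1 + t) * (x * y) + x + 2 ^ t * y with hMdef
  obtain ⟨c1, hc1⟩ : ∃ c, 2 ^ (g1 + t) = 2 * c :=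
    ⟨2 ^ (g1 + t - 1), by rw [← pow_succ']; congr 1; omega⟩
  obtain ⟨c2, hc2⟩ : ∃ c, 2 ^ t = 2 * c :=
    ⟨2 ^ (t - 1), by rw [← pow_succ']; congr 1; omega⟩
  have hModd : M % 2 = 1 := by
    rw [hMdef, hc1, hc2]
    have h9 : 2 * c1 * (x * y) + x + 2 * c2 * y = 2 * (c1 * (x * y) + c2 * y) + x := by ring
    rw [h9]
    omega
  have hMdvd : M ∣ 2 ^ k := ⟨2 ^ g1, by rw [hM]; ring⟩
  obtain ⟨jj, hjle, hjj⟩ := (Nat.dvd_prime_pow Nat.prime_two).mp hMdvd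
  have hM3 : 3 ≤ M := by
    have h2 : 2 ≤ 2 ^ (g1 + t) := by
      calc (2:ℕ) = 2 ^ 1 := by norm_num
      _ ≤ 2 ^ (g1 + t) := Nat.pow_le_pow_right (by norm_num) (by omega)
    have hxy : 0 < x * y := Nat.mul_pos (by omega) (by omega)
    have h3 : 2 ^ (g1 + t) ≤ 2 ^ (g1 + t) * (x * y) := Nat.le_mul_of_pos_right _ hxy
    omega
  have hjz : jj = 0 := by
    by_contra hc
    obtain ⟨c3, hc3⟩ : ∃ c, 2 ^ jj = 2 * c :=
      ⟨2 ^ (jj - 1), by rw [← pow_succ']; congr 1; omega⟩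
    rw [hjj, hc3] at hModd
    omega
  rw [hjz, pow_zero] at hjj
  omega

set_option maxHeartbeats 1000000 in
theorem stmt_15 (a b ℓ m : ℕ) (ha : 0 < a) (hb : 0 < b) (hao : Odd a) (hbo : Odd b)
    (hsa : s a = ℓ) (hsb : s b = m) (hℓ : 2 ≤ ℓ) (hm : 2 ≤ m)
    (h : s (a * b) = 2) : a * b < 2 ^ (2 * ℓ * m - 4) := by
  -- a, b ≥ 3
  have ha2 : a % 2 = 1 := Nat.odd_iff.mp hao
  have hb2 : b % 2 = 1 := Nat.odd_iff.mp hbo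
  have hs1e : s 1 = 1 := by
    rw [kst_s_rec 1 one_ne_zero]
    simp [s]
  have ha3 : 3 ≤ a := by
    by_contra hc
    have h1 : a = 1 := by omega
    rw [h1, hs1e] at hsa
    omega
  have hb3 : 3 ≤ b := by
    by_contra hc
    have h1 : b = 1 := by omega
    rw [h1, hs1e] at hsb
    omega
  -- ab = 2^k + 1
  have hab2 : (a * b) % 2 = 1 := by
    rw [Nat.mul_mod, ha2, hb2]
  have habne : a * b ≠ 0 := by positivity
  have hrec := kst_s_rec (a * b) habne
  rw [h] at hrec
  have hs1 : s (a * b / 2) = 1 := by omega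
  obtain ⟨j, hj⟩ := kst_s_eq_one _ hs1
  have hk : a * b = 2 ^ (j + 1) + 1 := by
    have := Nat.div_add_mod (a * b) 2
    rw [hj] at this
    rw [pow_succ]
    omega
  set k := j + 1 with hkdef
  -- k ≥ 3 since ab ≥ 9
  have hk3 : 3 ≤ k := by
    have h9 : 9 ≤ a * b := by
      calc (9:ℕ) = 3 * 3 := by norm_num
      _ ≤ a * b := Nat.mul_le_mul ha3 hb3
    have : 2 ^ k + 1 ≥ 9 := by omega
    by_contra hc
    interval_cases k <;> omega
  -- 2-adic valuation of a-1 and b-1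
  obtain ⟨g1, x, hxodd, hax⟩ := Nat.exists_eq_pow_mul_and_not_dvd (n := a - 1) (by omega) 2 (by norm_num)
  obtain ⟨g2, y, hyodd, hby⟩ := Nat.exists_eq_pow_mul_and_not_dvd (n := b - 1) (by omega) 2 (by norm_num)
  have hx2 : x % 2 = 1 := by omega
  have hy2 : y % 2 = 1 := by omega
  have hxpos : 1 ≤ x := by
    rcases Nat.eq_zero_or_pos x with rfl | h1
    · omega
    · exact h1
  have hypos : 1 ≤ y := by omega
  have hA : a = 2 ^ g1 * x + 1 := by omega
  have hB : b = 2 ^ g2 * y + 1 := by omega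
  have hg1pos : 1 ≤ g1 := by
    by_contra hc
    have : g1 = 0 := by omega
    rw [this] at hA
    simp at hA
    omega
  have hg2pos : 1 ≤ g2 := by
    by_contra hc
    have : g2 = 0 := by omega
    rw [this] at hB
    simp at hB
    omega
  -- key expansion: 2^k = 2^(g1+g2) x y + 2^g1 x + 2^g2 y
  have hexp : 2 ^ k = 2 ^ (g1 + g2) * (x * y) + 2 ^ g1 * x + 2 ^ g2 * y := by
    have : a * b = 2 ^ (g1 + g2) * (x * y) + 2 ^ g1 * x + 2 ^ g2 * y + 1 := by
      rw [hA, hB, pow_add]; ring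
    omega
  -- g1 = g2
  have hexp' : 2 ^ k = 2 ^ (g2 + g1) * (y * x) + 2 ^ g2 * y + 2 ^ g1 * x := by
    rw [hexp]; ring
  have hgeq : g1 = g2 := by
    have h1 := kst_not_lt k g1 g2 x y hx2 hypos hxpos hg1pos hexp
    have h2 := kst_not_lt k g2 g1 y x hy2 hxpos hypos hg2pos hexp'
    omega
  subst hgeq
  set g := g1 with hgdef
  have hBg : b = 2 ^ g * y + 1 := hB
  -- 2g < k
  have h2g : 2 * g < k := by
    have hxy : 1 ≤ x * y := Nat.mul_pos (by omega) (by omega)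
    have hlt : 2 ^ (2 * g) < 2 ^ k := by
      have h1 : 2 ^ (2 * g) ≤ 2 ^ (g + g) * (x * y) := by
        rw [two_mul]
        exact Nat.le_mul_of_pos_right _ (by positivity)
      have h2 : 0 < 2 ^ g * x := by positivity
      omega
    exact (Nat.pow_lt_pow_iff_right (by norm_num)).mp hlt
  -- set up bit sets
  set K := k + 1 with hKdef
  have habltK : a * b < 2 ^ K := by
    rw [hk, hKdef, pow_succ]
    have : 1 ≤ 2 ^ k := Nat.one_le_two_pow
    omega
  have haltK : a < 2 ^ K := lt_of_le_of_lt (Nat.le_mul_of_pos_right a hb) habltK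
  have hbltK : b < 2 ^ K := lt_of_le_of_lt (Nat.le_mul_of_pos_left b ha) habltK
  set A := (Finset.range K).filter (fun i => a.testBit i = true) with hAdef
  set B := (Finset.range K).filter (fun i => b.testBit i = true) with hBdef
  have hsumA : ∑ i ∈ A, 2 ^ i = a := kst_sum_filter_testBit K a haltK
  have hsumB : ∑ i ∈ B, 2 ^ i = b := kst_sum_filter_testBit K b hbltK
  have hcardA : A.card = ℓ := by rw [hAdef, kst_card_filter_testBit K a haltK, hsa]
  have hcardB : B.card = m := by rw [hBdef, kst_card_filter_testBit K b hbltK, hsb]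
  set E := A ×ˢ B with hEdef
  have hprodsum : ∑ p ∈ E, 2 ^ (p.1 + p.2) = a * b := by
    rw [hEdef, Finset.sum_product]
    rw [← hsumA, ← hsumB, Finset.sum_mul_sum]
    congr 1; ext i; congr 1; ext j; rw [pow_add]
  have hcardE : E.card = ℓ * m := by rw [hEdef, Finset.card_product, hcardA, hcardB]
  -- each exponent ≤ k
  have hexpk : ∀ p ∈ E, p.1 + p.2 ≤ k := by
    intro p hp
    rw [hEdef, Finset.mem_product] at hp
    have h1 : a.testBit p.1 = true := (Finset.mem_filter.mp hp.1).2
    have h2 : b.testBit p.2 = true := (Finset.mem_filter.mp hp.2).2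
    have e1 : 2 ^ p.1 ≤ a := Nat.ge_two_pow_of_testBit h1
    have e2 : 2 ^ p.2 ≤ b := Nat.ge_two_pow_of_testBit h2
    have : 2 ^ (p.1 + p.2) ≤ a * b := by rw [pow_add]; exact Nat.mul_le_mul e1 e2
    by_contra hc
    have : 2 ^ (k + 1) ≤ 2 ^ (p.1 + p.2) := Nat.pow_le_pow_right (by norm_num) (by omega)
    rw [hk] at *
    have : 2 ^ (k+1) = 2 * 2 ^ k := by rw [pow_succ]; ring
    omega
  -- partial sums
  set P : ℕ → ℕ := fun t => ∑ p ∈ E.filter (fun p => p.1 + p.2 ≤ t), 2 ^ (p.1 + p.2) with hPdef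
  set q : ℕ → ℕ := fun t => ∑ p ∈ E.filter (fun p => ¬ (p.1 + p.2 ≤ t)), 2 ^ (p.1 + p.2 - (t + 1)) with hqdef
  have hsplit : ∀ t, a * b = P t + 2 ^ (t + 1) * q t := by
    intro t
    rw [← hprodsum, hPdef, hqdef]
    simp only
    rw [Finset.mul_sum]
    have : ∀ p ∈ E.filter (fun p => ¬ (p.1 + p.2 ≤ t)),
        2 ^ (t + 1) * 2 ^ (p.1 + p.2 - (t + 1)) = 2 ^ (p.1 + p.2) := by
      intro p hp
      have := (Finset.mem_filter.mp hp).2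
      simp at this
      rw [← pow_add]
      congr 1
      omega
    rw [Finset.sum_congr rfl this]
    exact (Finset.sum_filter_add_sum_filter_not E _ _).symm
  have hdiv : ∀ t, (a * b) / 2 ^ (t + 1) = P t / 2 ^ (t + 1) + q t := by
    intro t
    rw [hsplit t, mul_comm (2 ^ (t+1)) (q t), Nat.add_mul_div_right _ _ (Nat.pow_pos (by norm_num))]
  -- sum of q over range K
  have hq' : ∀ t, q t = ∑ p ∈ E, if ¬ (p.1 + p.2 ≤ t) then 2 ^ (p.1 + p.2 - (t + 1)) else 0 := by
    intro t
    rw [hqdef]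
    exact Finset.sum_filter _ _
  have hsumq : ∑ t ∈ Finset.range K, q t = a * b - ℓ * m := by
    have hswap : ∑ t ∈ Finset.range K, q t
        = ∑ p ∈ E, ∑ t ∈ Finset.range K,
            if ¬ (p.1 + p.2 ≤ t) then 2 ^ (p.1 + p.2 - (t + 1)) else 0 := by
      simp only [hq']
      rw [Finset.sum_comm]
    rw [hswap]
    have hinner : ∀ p ∈ E, (∑ t ∈ Finset.range K,
        if ¬ (p.1 + p.2 ≤ t) then 2 ^ (p.1 + p.2 - (t + 1)) else 0) = 2 ^ (p.1 + p.2) - 1 := by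
      intro p hp
      have hek : p.1 + p.2 ≤ k := hexpk p hp
      rw [← Finset.sum_filter]
      have hfeq : (Finset.range K).filter (fun t => ¬ (p.1 + p.2 ≤ t)) = Finset.range (p.1 + p.2) := by
        ext t
        simp only [Finset.mem_filter, Finset.mem_range, not_le]
        omega
      rw [hfeq]
      have hcongr : ∀ t ∈ Finset.range (p.1 + p.2),
          2 ^ (p.1 + p.2 - (t + 1)) = 2 ^ (p.1 + p.2 - 1 - t) := by
        intro t _
        congr 1
        omega
      rw [Finset.sum_congr rfl hcongr]
      rw [Finset.sum_range_reflect (fun i => 2 ^ i) (p.1 + p.2)]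
      exact kst_geom2 _
    rw [Finset.sum_congr rfl hinner]
    rw [Finset.sum_tsub_distrib E (fun p _ => Nat.one_le_two_pow)]
    rw [hprodsum]
    have : ∑ p ∈ E, (1:ℕ) = ℓ * m := by rw [Finset.sum_const, smul_eq_mul, mul_one, hcardE]
    rw [this]
  -- the grand identity : number of carries = ℓm - 2
  have hlmle : ℓ * m ≤ a * b := by
    calc ℓ * m = ∑ p ∈ E, (1:ℕ) := by rw [Finset.sum_const, smul_eq_mul, mul_one, hcardE]
    _ ≤ ∑ p ∈ E, 2 ^ (p.1 + p.2) := Finset.sum_le_sum (fun p _ => Nat.one_le_two_pow)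
    _ = a * b := hprodsum
  have hleg : ∑ t ∈ Finset.range K, (a * b) / 2 ^ (t + 1) = a * b - 2 := by
    rw [kst_legendre K (a * b) habltK, h]
  have hSr : ∑ t ∈ Finset.range K, P t / 2 ^ (t + 1) = ℓ * m - 2 := by
    have hsplitsum : ∑ t ∈ Finset.range K, (a * b) / 2 ^ (t + 1)
        = ∑ t ∈ Finset.range K, P t / 2 ^ (t + 1) + ∑ t ∈ Finset.range K, q t := by
      rw [← Finset.sum_add_distrib]
      exact Finset.sum_congr rfl (fun t _ => hdiv t)
    rw [hleg, hsumq] at hsplitsum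
    have h2ab : 2 ≤ a * b := by
      have : 9 ≤ a * b := by
        calc (9:ℕ) = 3 * 3 := by norm_num
        _ ≤ a * b := Nat.mul_le_mul ha3 hb3
      omega
    have hlm4 : 4 ≤ ℓ * m := by
      calc (4:ℕ) = 2 * 2 := by norm_num
      _ ≤ ℓ * m := Nat.mul_le_mul hℓ hm
    omega
  -- lower bound on carries: P t ≥ 2^(t+1) + 1 for g ≤ t < k
  have hbitA := kst_bit_struct a x g hx2 hg1pos hA
  have hbitB := kst_bit_struct b y g hy2 hg1pos hBg
  have h0A : (0, 0).1 ∈ A ∧ (0:ℕ) ∈ B := by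
    constructor
    · rw [hAdef]
      refine Finset.mem_filter.mpr ⟨Finset.mem_range.mpr (by omega), ?_⟩
      exact (hbitA 0 (by omega)).mpr (Or.inl rfl)
    · rw [hBdef]
      refine Finset.mem_filter.mpr ⟨Finset.mem_range.mpr (by omega), ?_⟩
      exact (hbitB 0 (by omega)).mpr (Or.inl rfl)
  have hgA : g ∈ A := by
    rw [hAdef]
    refine Finset.mem_filter.mpr ⟨Finset.mem_range.mpr (by omega), ?_⟩
    exact (hbitA g le_rfl).mpr (Or.inr rfl)
  have hgB : g ∈ B := by
    rw [hBdef]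
    refine Finset.mem_filter.mpr ⟨Finset.mem_range.mpr (by omega), ?_⟩
    exact (hbitB g le_rfl).mpr (Or.inr rfl)
  have hmemA : ∀ i ∈ A, i ≤ g → i = 0 ∨ i = g := by
    intro i hi hig
    have : a.testBit i = true := by
      rw [hAdef] at hi
      exact (Finset.mem_filter.mp hi).2
    exact (hbitA i hig).mp this
  have hmemB : ∀ i ∈ B, i ≤ g → i = 0 ∨ i = g := by
    intro i hi hig
    have : b.testBit i = true := by
      rw [hBdef] at hi
      exact (Finset.mem_filter.mp hi).2
    exact (hbitB i hig).mp this
  have hPg : P g = 2 ^ (g + 1) + 1 := by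
    have hfilterg : E.filter (fun p => p.1 + p.2 ≤ g)
        = {((0:ℕ), (0:ℕ)), (0, g), (g, 0)} := by
      ext p
      simp only [Finset.mem_filter, hEdef, Finset.mem_product, Finset.mem_insert,
        Finset.mem_singleton]
      constructor
      · rintro ⟨⟨hpA, hpB⟩, hpg⟩
        have h1 := hmemA p.1 hpA (by omega)
        have h2 := hmemB p.2 hpB (by omega)
        rcases h1 with h1 | h1 <;> rcases h2 with h2 | h2
        · left; rw [Prod.ext_iff]; exact ⟨h1, h2⟩
        · right; left; rw [Prod.ext_iff]; exact ⟨h1, h2⟩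
        · right; right; rw [Prod.ext_iff]; exact ⟨h1, h2⟩
        · exfalso; omega
      · rintro (rfl | rfl | rfl)
        · exact ⟨⟨h0A.1, h0A.2⟩, by simp⟩
        · exact ⟨⟨h0A.1, hgB⟩, by simp⟩
        · exact ⟨⟨hgA, h0A.2⟩, by simp⟩
    rw [hPdef]
    simp only
    rw [hfilterg]
    have hne1 : ((0:ℕ),(0:ℕ)) ∉ ({((0:ℕ), g), (g, (0:ℕ))} : Finset (ℕ × ℕ)) := by
      simp only [Finset.mem_insert, Finset.mem_singleton, Prod.mk.injEq]
      push_neg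
      constructor
      · intro _; omega
      · intro h9; exfalso; omega
    have hne2 : ((0:ℕ), g) ∉ ({(g, (0:ℕ))} : Finset (ℕ × ℕ)) := by
      simp only [Finset.mem_singleton, Prod.mk.injEq]
      push_neg
      intro h9
      exfalso
      omega
    rw [Finset.sum_insert hne1, Finset.sum_insert hne2, Finset.sum_singleton]
    simp only [add_zero, zero_add, pow_zero, pow_succ]
    ring
  have hPmono : ∀ t, P t ≤ P (t + 1) := by
    intro t
    rw [hPdef]
    apply Finset.sum_le_sum_of_subset
    intro p hp
    simp only [Finset.mem_filter] at hp ⊢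
    exact ⟨hp.1, by omega⟩
  have hclaim : ∀ t, g ≤ t → (t < k → 2 ^ (t + 1) + 1 ≤ P t) := by
    intro t ht
    induction t, ht using Nat.le_induction with
    | base =>
      intro _
      rw [hPg]
    | succ t ht ih =>
      intro htk
      have hPt := ih (by omega)
      have hge : 2 ^ (t + 1) + 1 ≤ P (t + 1) := le_trans hPt (hPmono t)
      have habmod : (a * b) % 2 ^ (t + 2) = 1 := by
        rw [hk]
        have : (2:ℕ) ^ k = 2 ^ (t + 2) * 2 ^ (k - (t + 2)) := by
          rw [← pow_add]
          congr 1
          omega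
        rw [this]
        rw [Nat.mul_add_mod]
        exact Nat.mod_eq_of_lt (Nat.one_lt_two_pow_iff.mpr (by omega))
      have hPmod : P (t + 1) % 2 ^ (t + 2) = 1 := by
        have := hsplit (t + 1)
        have heq : (P (t + 1) + 2 ^ (t + 2) * q (t + 1)) % 2 ^ (t + 2) = 1 := by
          rw [← this]; exact habmod
        rwa [Nat.add_mul_mod_self_left] at heq
      have hdm := Nat.div_add_mod (P (t + 1)) (2 ^ (t + 2))
      rw [hPmod] at hdm
      rcases Nat.eq_zero_or_pos (P (t + 1) / 2 ^ (t + 2)) with hz | hpos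
      · exfalso
        rw [hz, Nat.mul_zero, Nat.zero_add] at hdm
        have h0 : 0 < 2 ^ (t + 1) := Nat.pow_pos (by norm_num)
        omega
      · have hmul : 2 ^ (t + 2) * 1 ≤ 2 ^ (t + 2) * (P (t + 1) / 2 ^ (t + 2)) :=
          Nat.mul_le_mul_left _ hpos
        have hp1 : (2:ℕ) ^ (t + 2) = 4 * 2 ^ t := by ring
        have hp2 : (2:ℕ) ^ (t + 1 + 1) = 4 * 2 ^ t := by ring
        have hp3 : (2:ℕ) ^ (t + 1) = 2 * 2 ^ t := by ring
        omega
  have hrt : ∀ t ∈ Finset.Ico g k, 1 ≤ P t / 2 ^ (t + 1) := by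
    intro t ht
    rw [Finset.mem_Ico] at ht
    have := hclaim t ht.1 ht.2
    have hpos : (0:ℕ) < 2 ^ (t + 1) := by positivity
    exact (Nat.one_le_div_iff hpos).mpr (by omega)
  have hlow : k - g ≤ ∑ t ∈ Finset.range K, P t / 2 ^ (t + 1) := by
    calc k - g = (Finset.Ico g k).card := by rw [Nat.card_Ico]
    _ = ∑ t ∈ Finset.Ico g k, (1:ℕ) := by rw [Finset.sum_const, smul_eq_mul, mul_one]
    _ ≤ ∑ t ∈ Finset.Ico g k, P t / 2 ^ (t + 1) := Finset.sum_le_sum hrt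
    _ ≤ ∑ t ∈ Finset.range K, P t / 2 ^ (t + 1) := by
        apply Finset.sum_le_sum_of_subset
        intro t ht
        rw [Finset.mem_Ico] at ht
        rw [Finset.mem_range]
        omega
  rw [hSr] at hlow
  -- conclude
  have hv : 2 * ℓ * m = 2 * (ℓ * m) := by ring
  have hfinal : k + 1 ≤ 2 * ℓ * m - 4 := by omega
  calc a * b = 2 ^ k + 1 := hk
  _ < 2 ^ (k + 1) := by
      rw [pow_succ]
      have : (1:ℕ) ≤ 2 ^ k := Nat.one_le_two_pow
      omega
  _ ≤ 2 ^ (2 * ℓ * m - 4) := Nat.pow_le_pow_right (by norm_num) hfinal
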